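/- arXiv:2404.06252 — 6 statements merged into one kernel-verified Lean document; each statement's English description precedes it below -/
import Mathlib

section
/- Consider the profile x on n ≥ 6 agents (n even) with one agent at 0, one at 1, n/2 − 1 agents at ε, and n/2 − 1 agents at 1 − ε, where 0 < ε < 1/4. If a pair of facility locations {l1, l2} satisfies l1 = l2, then its social cost on x is at least (n/2)·ε. -/
noncomputable def cost2 (p : ℝ × ℝ) (y : ℝ) : ℝ := min |p.1 - y| |p.2 - y|

noncomputable def SC {n : ℕ} (p : ℝ × ℝ) (x : Fin n → ℝ) : ℝ := ∑ i, cost2 p (x i)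

noncomputable def OPT {n : ℕ} (x : Fin n → ℝ) : ℝ :=
  sInf {c | ∃ l1 l2 : ℝ, c = SC (l1, l2) x}

/-- One agent at `0`, one at `1`, `n/2 - 1` agents at `ε`, `n/2 - 1` agents at `1 - ε`. -/
noncomputable def hardProfile (n : ℕ) (ε : ℝ) : Fin n → ℝ := fun i =>
  if (i : ℕ) = 0 then 0 else if (i : ℕ) = n - 1 then 1
  else if (i : ℕ) < n / 2 then ε else 1 - ε

lemma hp_rev (n : ℕ) (ε : ℝ) (hn : 6 ≤ n) (hne : Even n) (i : Fin n) :
    hardProfile n ε (Fin.rev i) = 1 - hardProfile n ε i := by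
  obtain ⟨k, hk⟩ := hne
  have hi := i.isLt
  have hrev : ((Fin.rev i : Fin n) : ℕ) = n - (i + 1) := Fin.val_rev i
  simp only [hardProfile, hrev]
  split_ifs <;> first | ring1 | (exfalso; omega)

lemma hp_gap (n : ℕ) (ε : ℝ) (hε0 : 0 < ε) (hε : ε < 1 / 4) (i : Fin n) :
    2 * ε ≤ |1 - 2 * hardProfile n ε i| := by
  simp only [hardProfile]
  split_ifs <;> rw [le_abs] <;> first | (left; linarith) | (right; linarith)

/-- If the two facilities coincide, the social cost on the hard profile is at least `(n/2)·ε`. -/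
theorem stmt2 (n : ℕ) (ε : ℝ) (hn : 6 ≤ n) (hne : Even n)
    (hε0 : 0 < ε) (hε : ε < 1 / 4) (l1 l2 : ℝ) (hl : l1 = l2) :
    (n : ℝ) / 2 * ε ≤ SC (l1, l2) (hardProfile n ε) := by
  subst hl
  rename' l1 => l2
  set x := hardProfile n ε with hx
  have key : ∀ i : Fin n, 2 * ε ≤ cost2 (l2, l2) (x i) + cost2 (l2, l2) (x (Fin.rev i)) := by
    intro i
    rw [hx, hp_rev n ε hn hne i]
    simp only [cost2, min_self]
    have h1 := hp_gap n ε hε0 hε i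
    have h2 := abs_add_le (l2 - hardProfile n ε i) ((1 - hardProfile n ε i) - l2)
    have h3 : |(1 - hardProfile n ε i) - l2| = |l2 - (1 - hardProfile n ε i)| :=
      abs_sub_comm _ _
    have h4 : (l2 - hardProfile n ε i) + ((1 - hardProfile n ε i) - l2)
        = 1 - 2 * hardProfile n ε i := by ring
    rw [h4, h3] at h2
    linarith
  have hsum : (n : ℝ) * (2 * ε) ≤ 2 * SC (l2, l2) x := by
    have h1 : ∑ i : Fin n, (cost2 (l2, l2) (x i) + cost2 (l2, l2) (x (Fin.rev i)))
        = 2 * SC (l2, l2) x := by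
      rw [Finset.sum_add_distrib]
      have := Equiv.sum_comp (Fin.revPerm : Equiv.Perm (Fin n))
        (fun i => cost2 (l2, l2) (x i))
      simp only [Fin.revPerm_apply] at this
      rw [this, SC]; ring
    calc (n : ℝ) * (2 * ε) = ∑ _i : Fin n, 2 * ε := by
          rw [Finset.sum_const, Finset.card_univ, Fintype.card_fin, nsmul_eq_mul]
      _ ≤ _ := Finset.sum_le_sum (fun i _ => key i)
      _ = 2 * SC (l2, l2) x := h1
  nlinarith [mul_nonneg (show (0:ℝ) ≤ n by positivity) hε0.le]
end

section
/- Consider the profile x on n ≥ 6 agents (n even) with one agent at 0, one at 1, n/2 − 1 agents at ε, and n/2 − 1 agents at 1 − ε, where 0 < ε < 1/4. If a pair of facility locations {l1, l2} satisfies l1 ≤ 0 or l1 ≥ 1, then its social cost on x is at least (n/2 − 1)·ε. -/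
lemma cost2_nonneg (p : ℝ × ℝ) (y : ℝ) : 0 ≤ cost2 p y :=
  le_min (abs_nonneg _) (abs_nonneg _)

lemma sum_bound {n : ℕ} (p : ℝ × ℝ) (x : Fin n → ℝ) (S : Finset (Fin n)) (y ε : ℝ)
    (hx : ∀ i ∈ S, x i = y) (hc : ε ≤ cost2 p y) :
    (S.card : ℝ) * ε ≤ SC p x := by
  have h1 : (S.card : ℝ) * ε ≤ ∑ i ∈ S, cost2 p (x i) := by
    calc (S.card : ℝ) * ε = ∑ _i ∈ S, ε := by
          rw [Finset.sum_const, nsmul_eq_mul]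
      _ ≤ ∑ i ∈ S, cost2 p (x i) :=
          Finset.sum_le_sum (fun i hi => by rw [hx i hi]; exact hc)
  refine h1.trans ?_
  exact Finset.sum_le_sum_of_subset_of_nonneg (Finset.subset_univ S)
    (fun i _ _ => cost2_nonneg p (x i))

lemma card_filter_fin (n : ℕ) (P : ℕ → Prop) [DecidablePred P] :
    ((Finset.univ : Finset (Fin n)).filter (fun i => P i.val)).card
      = ((Finset.range n).filter P).card := by
  rw [← Nat.Iio_eq_range, ← Fin.map_valEmbedding_univ, Finset.filter_map, Finset.card_map]
  rfl

/-- If one facility lies at or outside the extremes (`l1 ≤ 0` or `l1 ≥ 1`),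
the social cost on the hard profile is at least `(n/2 - 1)·ε`. -/
theorem stmt3 (n : ℕ) (ε : ℝ) (hn : 6 ≤ n) (hne : Even n)
    (hε0 : 0 < ε) (hε : ε < 1 / 4) (l1 l2 : ℝ) (hl : l1 ≤ 0 ∨ 1 ≤ l1) :
    ((n : ℝ) / 2 - 1) * ε ≤ SC (l1, l2) (hardProfile n ε) := by
  obtain ⟨m, rfl⟩ := hne
  have hm : 3 ≤ m := by omega
  have hhalf : (m + m) / 2 = m := by omega
  have hcastgoal : ((m : ℝ) + m) / 2 - 1 = ((m - 1 : ℕ) : ℝ) := by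
    rw [Nat.cast_sub (by omega)]
    push_cast
    ring
  rcases le_or_gt l2 (1 / 2) with h2 | h2
  · -- use the cluster at 1 - ε
    set S : Finset (Fin (m + m)) := Finset.univ.filter
      (fun i => ¬ (i.val = 0) ∧ ¬ (i.val = (m + m) - 1) ∧ ¬ (i.val < (m + m) / 2)) with hS
    have hcard : S.card = m - 1 := by
      rw [hS]
      refine (card_filter_fin (m + m)
        (fun k => ¬ (k = 0) ∧ ¬ (k = (m + m) - 1) ∧ ¬ (k < (m + m) / 2))).trans ?_
      have : (Finset.range (m + m)).filter
          (fun i => ¬ (i = 0) ∧ ¬ (i = (m + m) - 1) ∧ ¬ (i < (m + m) / 2))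
          = Finset.Ico ((m + m) / 2) ((m + m) - 1) := by
        ext i
        simp only [Finset.mem_filter, Finset.mem_range, Finset.mem_Ico]
        omega
      rw [this, Nat.card_Ico]
      omega
    have hx : ∀ i ∈ S, hardProfile (m + m) ε i = 1 - ε := by
      intro i hi
      rw [hS, Finset.mem_filter] at hi
      simp only [hardProfile, hi.2.1, hi.2.2.1, hi.2.2.2, if_false]
    have hc : ε ≤ cost2 (l1, l2) (1 - ε) := by
      refine le_min ?_ ?_
      · rcases hl with h | h
        · rw [abs_sub_comm, abs_of_nonneg (by linarith)]; linarith
        · rw [abs_of_nonneg (by linarith)]; linarith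
      · rw [abs_sub_comm, abs_of_nonneg (by norm_num; linarith)]
        norm_num; linarith
    have := sum_bound (l1, l2) (hardProfile (m + m) ε) S (1 - ε) ε hx hc
    rw [hcard] at this
    rw [Nat.cast_add, hcastgoal]
    exact this
  · -- use the cluster at ε
    set S : Finset (Fin (m + m)) := Finset.univ.filter
      (fun i => ¬ (i.val = 0) ∧ ¬ (i.val = (m + m) - 1) ∧ i.val < (m + m) / 2) with hS
    have hcard : S.card = m - 1 := by
      rw [hS]
      refine (card_filter_fin (m + m)
        (fun k => ¬ (k = 0) ∧ ¬ (k = (m + m) - 1) ∧ k < (m + m) / 2)).trans ?_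
      have : (Finset.range (m + m)).filter
          (fun i => ¬ (i = 0) ∧ ¬ (i = (m + m) - 1) ∧ i < (m + m) / 2)
          = Finset.Ico 1 ((m + m) / 2) := by
        ext i
        simp only [Finset.mem_filter, Finset.mem_range, Finset.mem_Ico]
        omega
      rw [this, Nat.card_Ico]
      omega
    have hx : ∀ i ∈ S, hardProfile (m + m) ε i = ε := by
      intro i hi
      rw [hS, Finset.mem_filter] at hi
      simp only [hardProfile, hi.2.1, hi.2.2.1, hi.2.2.2, if_false, if_true]
    have hc : ε ≤ cost2 (l1, l2) ε := by
      refine le_min ?_ ?_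
      · rcases hl with h | h
        · rw [abs_sub_comm, abs_of_nonneg (by linarith)]; linarith
        · rw [abs_of_nonneg (by linarith)]; linarith
      · rw [abs_of_nonneg (by linarith)]; linarith
    have := sum_bound (l1, l2) (hardProfile (m + m) ε) S ε ε hx hc
    rw [hcard] at this
    rw [Nat.cast_add, hcastgoal]
    exact this
end

section
/- Any deterministic mechanism f for the two-facility game on the line (n ≥ 6 agents, n even) satisfying the property that for every profile x, either the two output facilities coincide or some output facility l satisfies l ≤ min x or l ≥ max x, has approximation ratio at least n/4 for social cost. Concretely, on the profile with one agent at 0, one at 1, n/2 − 1 agents at ε, and n/2 − 1 agents at 1 − ε (ε ∈ (0, 1/4)), the social cost of f is at least (n/2 − 1)·ε while OPT equals 2ε. -/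
lemma tri (l p q : ℝ) : |p - q| ≤ |l - p| + |l - q| := by
  have h : p - q = -(l - p) + (l - q) := by ring
  calc |p - q| = |(-(l - p)) + (l - q)| := by rw [← h]
    _ ≤ |(-(l - p))| + |l - q| := abs_add_le _ _
    _ = |l - p| + |l - q| := by rw [abs_neg]

lemma cost2_pair (l1 l2 y : ℝ) : cost2 (l1, l2) y = min |l1 - y| |l2 - y| := rfl

lemma SC_eq (n : ℕ) (ε : ℝ) (p : ℝ × ℝ) : SC p (hardProfile n ε) =
    ∑ i ∈ Finset.range n, cost2 p
      (if i = 0 then (0:ℝ) else if i = n - 1 then 1 else if i < n / 2 then ε else 1 - ε) := by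
  unfold SC hardProfile
  exact Fin.sum_univ_eq_sum_range
    (fun j => cost2 p (if j = 0 then (0:ℝ) else if j = n - 1 then 1 else if j < n / 2 then ε else 1 - ε)) n

lemma minadd {ε x y : ℝ} (hε : 0 ≤ ε) (hx : 0 ≤ x) (hy : 0 ≤ y) (h : ε ≤ x + y) :
    ε ≤ min ε x + min ε y := by
  rcases le_total ε x with h1 | h1
  · rw [min_eq_left h1]; have := le_min hε hy; linarith
  · rw [min_eq_right h1]
    rcases le_total ε y with h2 | h2
    · rw [min_eq_left h2]; linarith
    · rw [min_eq_right h2]; linarith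

lemma SC_lower (n : ℕ) (hn : 6 ≤ n) (hne : Even n) (ε : ℝ) (p : ℝ × ℝ)
    (c0 c1 A B : ℝ) (hA0 : 0 ≤ A) (hB0 : 0 ≤ B)
    (h0 : c0 ≤ cost2 p 0) (h1 : c1 ≤ cost2 p 1)
    (hA : A ≤ cost2 p ε) (hB : B ≤ cost2 p (1 - ε)) :
    c0 + c1 + (((n / 2 : ℕ) : ℝ) - 1) * (A + B) ≤ SC p (hardProfile n ε) := by
  obtain ⟨k, hk⟩ := hne
  rw [SC_eq]
  have hsum : ∑ i ∈ Finset.range n,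
      ((if i < n / 2 then A else B)
        + (if i = 0 then c0 - A else 0) + (if i = n - 1 then c1 - B else 0))
      ≤ ∑ i ∈ Finset.range n, cost2 p
        (if i = 0 then (0:ℝ) else if i = n - 1 then 1 else if i < n / 2 then ε else 1 - ε) := by
    apply Finset.sum_le_sum
    intro i hi
    rw [Finset.mem_range] at hi
    split_ifs <;> first | linarith | omega
  refine le_trans (le_of_eq ?_) hsum
  have hG : ∑ i ∈ Finset.range n, (if i < n / 2 then A else B)
      = ((n / 2 : ℕ) : ℝ) * A + ((n / 2 : ℕ) : ℝ) * B := by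
    rw [Finset.range_eq_Ico, ← Finset.sum_Ico_consecutive _ (Nat.zero_le (n / 2)) (show n / 2 ≤ n by omega)]
    have e1 : ∑ i ∈ Finset.Ico 0 (n / 2), (if i < n / 2 then A else B) = ((n / 2 : ℕ) : ℝ) * A := by
      rw [Finset.sum_congr rfl (fun i hi => if_pos (Finset.mem_Ico.mp hi).2),
        Finset.sum_const, Nat.card_Ico, nsmul_eq_mul, Nat.sub_zero]
    have e2 : ∑ i ∈ Finset.Ico (n / 2) n, (if i < n / 2 then A else B) = ((n / 2 : ℕ) : ℝ) * B := by
      rw [Finset.sum_congr rfl (fun i hi => if_neg (by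
        have := (Finset.mem_Ico.mp hi).1; omega)),
        Finset.sum_const, Nat.card_Ico, nsmul_eq_mul]
      congr 2
      omega
    rw [e1, e2]
  rw [Finset.sum_add_distrib, Finset.sum_add_distrib, hG,
    Finset.sum_ite_eq' (Finset.range n) 0 (fun _ => c0 - A),
    Finset.sum_ite_eq' (Finset.range n) (n - 1) (fun _ => c1 - B),
    if_pos (Finset.mem_range.mpr (show 0 < n by omega)),
    if_pos (Finset.mem_range.mpr (show n - 1 < n by omega))]
  ring

lemma four_pt (ε l1 l2 : ℝ) (hε : 0 < ε) (hε4 : ε < 1/4) :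
    2*ε ≤ cost2 (l1,l2) 0 + cost2 (l1,l2) ε + cost2 (l1,l2) (1-ε) + cost2 (l1,l2) 1 := by
  have t1a := tri l1 0 ε; have t1b := tri l2 0 ε
  have t2a := tri l1 ε (1-ε); have t2b := tri l2 ε (1-ε)
  have t3a := tri l1 (1-ε) 1; have t3b := tri l2 (1-ε) 1
  have t4a := tri l1 0 (1-ε); have t4b := tri l2 0 (1-ε)
  have t5a := tri l1 ε 1; have t5b := tri l2 ε 1
  have t6a := tri l1 0 1; have t6b := tri l2 0 1
  have e1 : |(0:ℝ) - ε| = ε := by rw [zero_sub, abs_neg, abs_of_pos hε]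
  have e2 : |ε - (1-ε)| = 1 - 2*ε := by
    rw [show ε - (1-ε) = -(1-2*ε) by ring, abs_neg, abs_of_pos (by linarith)]
  have e3 : |(1-ε) - 1| = ε := by
    rw [show (1-ε) - 1 = -ε by ring, abs_neg, abs_of_pos hε]
  have e4 : |(0:ℝ) - (1-ε)| = 1 - ε := by
    rw [show (0:ℝ) - (1-ε) = -(1-ε) by ring, abs_neg, abs_of_pos (by linarith)]
  have e5 : |ε - 1| = 1 - ε := by
    rw [show ε - 1 = -(1-ε) by ring, abs_neg, abs_of_pos (by linarith)]
  have e6 : |(0:ℝ) - 1| = 1 := by norm_num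
  rw [e1] at t1a t1b; rw [e2] at t2a t2b; rw [e3] at t3a t3b
  rw [e4] at t4a t4b; rw [e5] at t5a t5b; rw [e6] at t6a t6b
  show 2*ε ≤ min |l1 - 0| |l2 - 0| + min |l1 - ε| |l2 - ε|
      + min |l1 - (1-ε)| |l2 - (1-ε)| + min |l1 - 1| |l2 - 1|
  rcases min_cases |l1 - 0| |l2 - 0| with ⟨m0, _⟩ | ⟨m0, _⟩ <;>
  rcases min_cases |l1 - ε| |l2 - ε| with ⟨m1, _⟩ | ⟨m1, _⟩ <;>
  rcases min_cases |l1 - (1-ε)| |l2 - (1-ε)| with ⟨m2, _⟩ | ⟨m2, _⟩ <;>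
  rcases min_cases |l1 - 1| |l2 - 1| with ⟨m3, _⟩ | ⟨m3, _⟩ <;>
  rw [m0, m1, m2, m3] <;>
  linarith [abs_nonneg (l1-0), abs_nonneg (l2-0), abs_nonneg (l1-ε), abs_nonneg (l2-ε),
    abs_nonneg (l1-(1-ε)), abs_nonneg (l2-(1-ε)), abs_nonneg (l1-1), abs_nonneg (l2-1)]

lemma SC_nonneg {n : ℕ} (p : ℝ × ℝ) (x : Fin n → ℝ) : 0 ≤ SC p x :=
  Finset.sum_nonneg (fun i _ => cost2_nonneg _ _)

lemma OPT_lower (n : ℕ) (hn : 6 ≤ n) (hne : Even n) (ε : ℝ) (hε : 0 < ε) (hε4 : ε < 1/4)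
    (l1 l2 : ℝ) : 2*ε ≤ SC (l1, l2) (hardProfile n ε) := by
  have hM : (3:ℝ) ≤ ((n / 2 : ℕ) : ℝ) := by exact_mod_cast (show (3:ℕ) ≤ n / 2 by omega)
  have hsl := SC_lower n hn hne ε (l1, l2) (cost2 (l1,l2) 0) (cost2 (l1,l2) 1)
    (cost2 (l1,l2) ε) (cost2 (l1,l2) (1-ε)) (cost2_nonneg _ _) (cost2_nonneg _ _)
    le_rfl le_rfl le_rfl le_rfl
  have h4 := four_pt ε l1 l2 hε hε4
  have hprod : 1 * (cost2 (l1,l2) ε + cost2 (l1,l2) (1-ε))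
      ≤ (((n / 2 : ℕ) : ℝ) - 1) * (cost2 (l1,l2) ε + cost2 (l1,l2) (1-ε)) :=
    mul_le_mul_of_nonneg_right (by linarith)
      (by have := cost2_nonneg (l1,l2) ε; have := cost2_nonneg (l1,l2) (1-ε); linarith)
  linarith

lemma OPT_upper_mem (n : ℕ) (hn : 6 ≤ n) (ε : ℝ) (hε : 0 < ε) (hε4 : ε < 1/4) :
    SC (ε, 1-ε) (hardProfile n ε) = 2*ε := by
  rw [SC_eq]
  have key : ∀ i ∈ Finset.range n,
      cost2 (ε, 1-ε) (if i = 0 then (0:ℝ) else if i = n - 1 then 1 else if i < n / 2 then ε else 1 - ε)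
      = (if i = 0 then ε else 0) + (if i = n - 1 then ε else 0) := by
    intro i hi
    rw [Finset.mem_range] at hi
    have c0 : cost2 (ε, 1-ε) 0 = ε := by
      show min |ε - 0| |(1-ε) - 0| = ε
      rw [sub_zero, sub_zero, abs_of_pos hε, abs_of_pos (by linarith : (0:ℝ) < 1-ε),
        min_eq_left (by linarith)]
    have c1 : cost2 (ε, 1-ε) 1 = ε := by
      show min |ε - 1| |(1-ε) - 1| = ε
      rw [show ε - 1 = -(1-ε) by ring, abs_neg, abs_of_pos (by linarith : (0:ℝ) < 1-ε),
        show (1-ε) - 1 = -ε by ring, abs_neg, abs_of_pos hε, min_eq_right (by linarith)]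
    have ca : cost2 (ε, 1-ε) ε = 0 := by
      show min |ε - ε| |(1-ε) - ε| = 0
      rw [sub_self, abs_zero, min_eq_left (abs_nonneg _)]
    have cb : cost2 (ε, 1-ε) (1-ε) = 0 := by
      show min |ε - (1-ε)| |(1-ε) - (1-ε)| = 0
      rw [sub_self, abs_zero, min_eq_right (abs_nonneg _)]
    split_ifs with h1 h2 h3 <;> first
      | (rw [c0]; ring1) | (rw [c1]; ring1) | (rw [ca]; ring1) | (rw [cb]; ring1) | (exfalso; omega)
  rw [Finset.sum_congr rfl key, Finset.sum_add_distrib,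
    Finset.sum_ite_eq' (Finset.range n) 0 (fun _ => ε),
    Finset.sum_ite_eq' (Finset.range n) (n-1) (fun _ => ε),
    if_pos (Finset.mem_range.mpr (show 0 < n by omega)),
    if_pos (Finset.mem_range.mpr (show n - 1 < n by omega))]
  ring

lemma OPT_eq (n : ℕ) (hn : 6 ≤ n) (hne : Even n) (ε : ℝ) (hε : 0 < ε) (hε4 : ε < 1/4) :
    OPT (hardProfile n ε) = 2*ε := by
  apply le_antisymm
  · apply csInf_le
    · exact ⟨0, fun c hc => by obtain ⟨l1, l2, rfl⟩ := hc; exact SC_nonneg _ _⟩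
    · exact ⟨ε, 1-ε, (OPT_upper_mem n hn ε hε hε4).symm⟩
  · apply le_csInf
    · refine ⟨SC (0,0) (hardProfile n ε), ?_⟩
      exact ⟨0, 0, rfl⟩
    rintro c ⟨l1, l2, rfl⟩
    exact OPT_lower n hn hne ε hε hε4 l1 l2

lemma coin_bound (n : ℕ) (hn : 6 ≤ n) (hne : Even n) (ε : ℝ) (hε : 0 < ε) (hε4 : ε < 1/4)
    (p : ℝ × ℝ) (hp : p.1 = p.2) :
    ((n / 2 : ℕ) : ℝ) * ε ≤ SC p (hardProfile n ε) := by
  have hM : (3:ℝ) ≤ ((n / 2 : ℕ) : ℝ) := by exact_mod_cast (show (3:ℕ) ≤ n / 2 by omega)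
  set M : ℝ := ((n / 2 : ℕ) : ℝ) with hMdef
  have hA : cost2 p ε = |p.1 - ε| := by rw [cost2, ← hp, min_self]
  have hB : cost2 p (1-ε) = |p.1 - (1-ε)| := by rw [cost2, ← hp, min_self]
  have hsl := SC_lower n hn hne ε p 0 0 |p.1 - ε| |p.1 - (1-ε)| (abs_nonneg _) (abs_nonneg _)
    (cost2_nonneg _ _) (cost2_nonneg _ _) (le_of_eq hA.symm) (le_of_eq hB.symm)
  have hAB : 1 - 2*ε ≤ |p.1 - ε| + |p.1 - (1-ε)| := by
    have := tri p.1 ε (1-ε)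
    rw [show ε - (1-ε) = -(1-2*ε) by ring, abs_neg, abs_of_pos (by linarith)] at this
    exact this
  have h1 : (M - 1) * (1 - 2*ε) ≤ (M - 1) * (|p.1 - ε| + |p.1 - (1-ε)|) :=
    mul_le_mul_of_nonneg_left hAB (by linarith)
  have h2 : 0 ≤ (M - 3) * (1 - 3*ε) := mul_nonneg (by linarith) (by linarith)
  linarith [hsl, h1, h2]

lemma out_bound (n : ℕ) (hn : 6 ≤ n) (hne : Even n) (ε : ℝ) (hε : 0 < ε) (hε4 : ε < 1/4)
    (u v : ℝ) (hu : u ≤ 0 ∨ 1 ≤ u) :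
    ((n / 2 : ℕ) : ℝ) * ε ≤ SC (u, v) (hardProfile n ε) := by
  have hM : (3:ℝ) ≤ ((n / 2 : ℕ) : ℝ) := by exact_mod_cast (show (3:ℕ) ≤ n / 2 by omega)
  set M : ℝ := ((n / 2 : ℕ) : ℝ) with hMdef
  set A : ℝ := min ε |v - ε| with hAdef
  set B : ℝ := min ε |v - (1-ε)| with hBdef
  have hA0 : 0 ≤ A := le_min hε.le (abs_nonneg _)
  have hB0 : 0 ≤ B := le_min hε.le (abs_nonneg _)
  have hAε : A ≤ ε := min_le_left _ _
  have hBε : B ≤ ε := min_le_left _ _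
  have hAB : A = ε ∨ B = ε := by
    rcases le_or_gt ε |v - ε| with h | h
    · exact Or.inl (min_eq_left h)
    · right
      apply min_eq_left
      have ht := tri v ε (1-ε)
      rw [show ε - (1-ε) = -(1-2*ε) by ring, abs_neg, abs_of_pos (by linarith)] at ht
      linarith
  rcases hu with hu | hu
  · -- u ≤ 0
    set C : ℝ := min ε |v - 1| with hCdef
    have hC0 : 0 ≤ C := le_min hε.le (abs_nonneg _)
    have hCε : C ≤ ε := min_le_left _ _
    have hBC : ε ≤ B + C := by
      apply minadd hε.le (abs_nonneg _) (abs_nonneg _)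
      have ht := tri v (1-ε) 1
      rw [show (1-ε) - 1 = -ε by ring, abs_neg, abs_of_pos hε] at ht
      exact ht
    have hAC : A = ε ∨ C = ε := by
      rcases le_or_gt ε |v - ε| with h | h
      · exact Or.inl (min_eq_left h)
      · right
        apply min_eq_left
        have ht := tri v ε 1
        rw [show ε - 1 = -(1-ε) by ring, abs_neg, abs_of_pos (by linarith)] at ht
        linarith
    have h1 : C ≤ cost2 (u, v) 1 := by
      have : ε ≤ |u - 1| := le_trans (by linarith) (neg_le_abs (u - 1))
      exact min_le_min this le_rfl
    have hA' : A ≤ cost2 (u, v) ε := by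
      have : ε ≤ |u - ε| := le_trans (by linarith) (neg_le_abs (u - ε))
      exact min_le_min this le_rfl
    have hB' : B ≤ cost2 (u, v) (1 - ε) := by
      have : ε ≤ |u - (1-ε)| := le_trans (by linarith) (neg_le_abs (u - (1-ε)))
      exact min_le_min this le_rfl
    have hsl := SC_lower n hn hne ε (u, v) 0 C A B hA0 hB0 (cost2_nonneg _ _) h1 hA' hB'
    rcases hAB with h | h
    · have hexp : (M - 1) * (A + B) = (M - 1) * ε + (M - 1) * B := by rw [h]; ring
      have hp1 : 0 ≤ (M - 2) * B := mul_nonneg (by linarith) hB0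
      linarith [hsl, hexp, hp1, hBC]
    · rcases hAC with h2 | h2
      · have hexp : (M - 1) * (A + B) = (M - 1) * ε + (M - 1) * B := by rw [h2]; ring
        have hp1 : 0 ≤ (M - 2) * B := mul_nonneg (by linarith) hB0
        linarith [hsl, hexp, hp1, hBC]
      · have hexp : (M - 1) * (A + B) = (M - 1) * ε + (M - 1) * A := by rw [h]; ring
        have hp1 : 0 ≤ (M - 1) * A := mul_nonneg (by linarith) hA0
        linarith [hsl, hexp, hp1, h2]
  · -- 1 ≤ u
    set C : ℝ := min ε |v - 0| with hCdef
    have hC0 : 0 ≤ C := le_min hε.le (abs_nonneg _)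
    have hCε : C ≤ ε := min_le_left _ _
    have hCA : ε ≤ A + C := by
      have h' : ε ≤ min ε |v - ε| + min ε |v - 0| := by
        apply minadd hε.le (abs_nonneg _) (abs_nonneg _)
        have ht := tri v ε 0
        rw [show ε - 0 = ε by ring, abs_of_pos hε] at ht
        exact ht
      linarith [h']
    have hBC : B = ε ∨ C = ε := by
      rcases le_or_gt ε |v - (1-ε)| with h | h
      · exact Or.inl (min_eq_left h)
      · right
        apply min_eq_left
        have ht := tri v (1-ε) 0
        rw [show (1-ε) - 0 = 1-ε by ring, abs_of_pos (by linarith)] at ht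
        linarith
    have h0 : C ≤ cost2 (u, v) 0 := by
      have : ε ≤ |u - 0| := le_trans (by linarith) (le_abs_self (u - 0))
      exact min_le_min this le_rfl
    have hA' : A ≤ cost2 (u, v) ε := by
      have : ε ≤ |u - ε| := le_trans (by linarith) (le_abs_self (u - ε))
      exact min_le_min this le_rfl
    have hB' : B ≤ cost2 (u, v) (1 - ε) := by
      have : ε ≤ |u - (1-ε)| := le_trans (by linarith) (le_abs_self (u - (1-ε)))
      exact min_le_min this le_rfl
    have hsl := SC_lower n hn hne ε (u, v) C 0 A B hA0 hB0 h0 (cost2_nonneg _ _) hA' hB'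
    rcases hBC with h | h
    · have hexp : (M - 1) * (A + B) = (M - 1) * ε + (M - 1) * A := by rw [h]; ring
      have hp1 : 0 ≤ (M - 2) * A := mul_nonneg (by linarith) hA0
      linarith [hsl, hexp, hp1, hCA]
    · rcases hAB with h2 | h2
      · have hexp : (M - 1) * (A + B) = (M - 1) * ε + (M - 1) * B := by rw [h2]; ring
        have hp1 : 0 ≤ (M - 1) * B := mul_nonneg (by linarith) hB0
        linarith [hsl, hexp, hp1, h]
      · have hexp : (M - 1) * (A + B) = (M - 1) * ε + (M - 1) * A := by rw [h2]; ring
        have hp1 : 0 ≤ (M - 1) * A := mul_nonneg (by linarith) hA0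
        linarith [hsl, hexp, hp1, h]

/-- Any deterministic mechanism whose output on every profile either has coinciding
facilities or has some facility at or outside the extremes, has approximation ratio
at least `n/4`; concretely, on the hard profile its social cost is at least
`(n/2 - 1)·ε` while `OPT = 2ε`. -/
theorem stmt4 (n : ℕ) (hn : 6 ≤ n) (hne : Even n)
    (f : (Fin n → ℝ) → ℝ × ℝ)
    (hprop : ∀ x : Fin n → ℝ,
      (f x).1 = (f x).2 ∨
      (∃ l, (l = (f x).1 ∨ l = (f x).2) ∧ ((∀ j, l ≤ x j) ∨ (∀ j, x j ≤ l)))) :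
    (∀ ε : ℝ, 0 < ε → ε < 1 / 4 →
      ((n : ℝ) / 2 - 1) * ε ≤ SC (f (hardProfile n ε)) (hardProfile n ε) ∧
      OPT (hardProfile n ε) = 2 * ε) ∧
    (∀ γ : ℝ, (∀ x : Fin n → ℝ, SC (f x) x ≤ γ * OPT x) → (n : ℝ) / 4 ≤ γ) := by
  have hM2 : ((n / 2 : ℕ) : ℝ) * 2 = (n : ℝ) := by
    obtain ⟨k, hk⟩ := hne
    have h2 : n / 2 = k := by omega
    rw [h2]
    exact_mod_cast congrArg (Nat.cast (R := ℝ)) (show k * 2 = n by omega)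
  have key : ∀ ε : ℝ, 0 < ε → ε < 1/4 →
      ((n / 2 : ℕ) : ℝ) * ε ≤ SC (f (hardProfile n ε)) (hardProfile n ε) := by
    intro ε hε hε4
    rcases hprop (hardProfile n ε) with h | ⟨l, hl, hout⟩
    · exact coin_bound n hn hne ε hε hε4 (f _) h
    · have hout' : l ≤ 0 ∨ 1 ≤ l := by
        rcases hout with h | h
        · left
          have := h ⟨0, by omega⟩
          simpa [hardProfile] using this
        · right
          have := h ⟨n - 1, by omega⟩
          simpa [hardProfile, show n - 1 ≠ 0 by omega] using this
      rcases hl with hl | hl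
      · have hb := out_bound n hn hne ε hε hε4 l (f (hardProfile n ε)).2 hout'
        rw [hl, Prod.mk.eta] at hb
        exact hb
      · have hb := out_bound n hn hne ε hε hε4 l (f (hardProfile n ε)).1 hout'
        rw [hl] at hb
        have hswap : SC ((f (hardProfile n ε)).2, (f (hardProfile n ε)).1) (hardProfile n ε)
            = SC (f (hardProfile n ε)) (hardProfile n ε) := by
          unfold SC
          apply Finset.sum_congr rfl
          intro i _
          show min _ _ = min _ _
          exact min_comm _ _
        rw [hswap] at hb
        exact hb
  constructor
  · intro ε hε hε4
    refine ⟨?_, OPT_eq n hn hne ε hε hε4⟩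
    have h := key ε hε hε4
    have hle : (n : ℝ) / 2 - 1 ≤ ((n / 2 : ℕ) : ℝ) := by linarith
    calc ((n : ℝ) / 2 - 1) * ε ≤ ((n / 2 : ℕ) : ℝ) * ε :=
          mul_le_mul_of_nonneg_right hle hε.le
      _ ≤ _ := h
  · intro γ hγ
    have h1 := key (1/8) (by norm_num) (by norm_num)
    have h2 := hγ (hardProfile n (1/8))
    rw [OPT_eq n hn hne (1/8) (by norm_num) (by norm_num)] at h2
    have h3 := le_trans h1 h2
    linarith
end

section
/- Mechanism 1 (the dictator mechanism) places l1 = x_t and, with d_A = max_{x_j ≤ x_t}(x_t − x_j) and d_B = max_{x_j ≥ x_t}(x_j − x_t), sets l2 = l1 + max(2·d_A, d_B) if d_A ≤ d_B, and l2 = l1 − max(d_A, 2·d_B) otherwise. For every profile x ∈ ℝ^n (n ≥ 2), the social cost of Mechanism 1 on x is at most (n − 1)·OPT(x). -/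
/-- `d_A = max_{x_j ≤ x_t} (x_t - x_j)`. -/
noncomputable def dA {n : ℕ} (x : Fin n → ℝ) (t : Fin n) : ℝ :=
  (Finset.univ.filter fun j => x j ≤ x t).sup'
    ⟨t, by simp⟩ (fun j => x t - x j)

/-- `d_B = max_{x_j ≥ x_t} (x_j - x_t)`. -/
noncomputable def dB {n : ℕ} (x : Fin n → ℝ) (t : Fin n) : ℝ :=
  (Finset.univ.filter fun j => x t ≤ x j).sup'
    ⟨t, by simp⟩ (fun j => x j - x t)

/-- Mechanism 1 with dictator `t`. -/
noncomputable def mech1 {n : ℕ} (x : Fin n → ℝ) (t : Fin n) : ℝ × ℝ :=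
  (x t,
    if dA x t ≤ dB x t then x t + max (2 * dA x t) (dB x t)
    else x t - max (dA x t) (2 * dB x t))


lemma pair_lb (c u v : ℝ) (h : u ≤ v) : v - u ≤ |c - u| + |c - v| := by
  have h1 : |v - u| ≤ |v - c| + |c - u| := abs_sub_le v c u
  rw [abs_of_nonneg (by linarith : (0:ℝ) ≤ v - u), abs_sub_comm v c] at h1
  linarith

lemma three_lb (c1 c2 p1 p2 p3 : ℝ) (h12 : p1 ≤ p2) (h23 : p2 ≤ p3) :
    min (p2 - p1) (p3 - p2) ≤
      cost2 (c1, c2) p1 + cost2 (c1, c2) p2 + cost2 (c1, c2) p3 := by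
  simp only [cost2]
  rcases le_total |c1 - p1| |c2 - p1| with h1 | h1 <;>
    rcases le_total |c1 - p2| |c2 - p2| with h2 | h2 <;>
      rcases le_total |c1 - p3| |c2 - p3| with h3 | h3 <;>
  · first | rw [min_eq_left h1] | rw [min_eq_right h1]
    first | rw [min_eq_left h2] | rw [min_eq_right h2]
    first | rw [min_eq_left h3] | rw [min_eq_right h3]
    linarith [pair_lb c1 p1 p2 h12, pair_lb c2 p1 p2 h12, pair_lb c1 p2 p3 h23,
      pair_lb c2 p2 p3 h23, pair_lb c1 p1 p3 (h12.trans h23), pair_lb c2 p1 p3 (h12.trans h23),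
      abs_nonneg (c1 - p1), abs_nonneg (c2 - p1), abs_nonneg (c1 - p2), abs_nonneg (c2 - p2),
      abs_nonneg (c1 - p3), abs_nonneg (c2 - p3),
      min_le_left (p2 - p1) (p3 - p2), min_le_right (p2 - p1) (p3 - p2)]

lemma sum3 {n : ℕ} (f : Fin n → ℝ) (hf : ∀ i, 0 ≤ f i) {i j k : Fin n}
    (hij : i ≠ j) (hik : i ≠ k) (hjk : j ≠ k) :
    f i + f j + f k ≤ ∑ m, f m := by
  have hsub : ({i, j, k} : Finset (Fin n)) ⊆ Finset.univ := Finset.subset_univ _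
  have hsum : ∑ m ∈ ({i, j, k} : Finset (Fin n)), f m = f i + f j + f k := by
    rw [Finset.sum_insert (by simp [hij, hik]), Finset.sum_insert (by simp [hjk]),
      Finset.sum_singleton]; ring
  rw [← hsum]
  exact Finset.sum_le_sum_of_subset_of_nonneg hsub (fun m _ _ => hf m)

lemma key {n : ℕ} (hn : 2 ≤ n) (x : Fin n → ℝ) (t : Fin n)
    (hAB : dA x t ≤ dB x t) (c1 c2 : ℝ) :
    SC (x t, x t + max (2 * dA x t) (dB x t)) x ≤ ((n : ℝ) - 1) * SC (c1, c2) x := by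
  have hleft : ∀ j, x j ≤ x t → x t - x j ≤ dA x t := fun j hj =>
    Finset.le_sup' (fun j => x t - x j) (by simp [hj])
  have hright : ∀ j, x t ≤ x j → x j - x t ≤ dB x t := fun j hj =>
    Finset.le_sup' (fun j => x j - x t) (by simp [hj])
  have hA0 : 0 ≤ dA x t := by have := hleft t le_rfl; linarith
  have hB0 : 0 ≤ dB x t := by have := hright t le_rfl; linarith
  obtain ⟨pb, hpbmem, hpb⟩ := Finset.exists_mem_eq_sup'
    (⟨t, by simp⟩ : (Finset.univ.filter fun j => x t ≤ x j).Nonempty) (fun j => x j - x t)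
  have hpb' : dB x t = x pb - x t := hpb
  have hpbge : x t ≤ x pb := (Finset.mem_filter.mp hpbmem).2
  set C := SC (c1, c2) x with hCdef
  have hC0 : 0 ≤ C := SC_nonneg _ _
  have cost_eq : ∀ i, cost2 (c1, c2) (x i) = cost2 (c1, c2) (x i) := fun _ => rfl
  -- C ≥ dA
  have hCa : dA x t ≤ C := by
    rcases eq_or_lt_of_le hA0 with h0 | h0
    · linarith
    · obtain ⟨pa, hpamem, hpa⟩ := Finset.exists_mem_eq_sup'
        (⟨t, by simp⟩ : (Finset.univ.filter fun j => x j ≤ x t).Nonempty) (fun j => x t - x j)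
      have hpa' : dA x t = x t - x pa := hpa
      have hpale : x pa < x t := by linarith
      have hpbgt : x t < x pb := by linarith
      have h1 : pa ≠ t := fun h => by rw [h] at hpale; linarith
      have h2 : pa ≠ pb := fun h => by rw [h] at hpale; linarith
      have h3 : t ≠ pb := fun h => by rw [h] at hpbgt; linarith
      have hthree := three_lb c1 c2 (x pa) (x t) (x pb) (le_of_lt hpale) (le_of_lt hpbgt)
      have hsum := sum3 (fun i => cost2 (c1, c2) (x i)) (fun i => cost2_nonneg _ _) h1 h2 h3
      have hmin : min (x t - x pa) (x pb - x t) = dA x t := by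
        rw [← hpa', ← hpb']; exact min_eq_left hAB
      calc dA x t = min (x t - x pa) (x pb - x t) := hmin.symm
        _ ≤ _ := hthree
        _ ≤ C := hsum
  -- per-agent bound
  have hagent : ∀ j, j ≠ t → cost2 (x t, x t + max (2 * dA x t) (dB x t)) (x j) ≤ C := by
    intro j hj
    rcases le_total (x j) (x t) with hji | hji
    · calc cost2 (x t, x t + max (2 * dA x t) (dB x t)) (x j)
          ≤ |x t - x j| := min_le_left _ _
        _ = x t - x j := abs_of_nonneg (by linarith)
        _ ≤ dA x t := hleft j hji
        _ ≤ C := hCa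
    · have hjb : x j ≤ x t + dB x t := by linarith [hright j hji]
      have hjD : x j ≤ x t + max (2 * dA x t) (dB x t) := by
        have := le_max_right (2 * dA x t) (dB x t); linarith
      have hcost : cost2 (x t, x t + max (2 * dA x t) (dB x t)) (x j)
          = min (x j - x t) (x t + max (2 * dA x t) (dB x t) - x j) := by
        show min |x t - x j| |x t + max (2 * dA x t) (dB x t) - x j| = _
        congr 1
        · rw [abs_sub_comm]; exact abs_of_nonneg (by linarith)
        · exact abs_of_nonneg (by linarith)
      rcases le_total (dB x t) (2 * dA x t) with hbd | hbd
      · have hm : max (2 * dA x t) (dB x t) = 2 * dA x t := max_eq_left hbd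
        rw [hcost, hm]
        rcases le_total (x j - x t) (dA x t) with h' | h'
        · exact le_trans (le_trans (min_le_left _ _) h') hCa
        · exact le_trans (le_trans (min_le_right _ _) (by linarith)) hCa
      · have hm : max (2 * dA x t) (dB x t) = dB x t := max_eq_right hbd
        rw [hcost, hm]
        by_cases hjb' : j = pb
        · subst hjb'
          have : x t + dB x t - x j = 0 := by linarith [hpb']
          rw [this]
          exact le_trans (min_le_right _ _) hC0
        · by_cases htb' : t = pb
          · have hb0 : dB x t = 0 := by rw [hpb', ← htb']; ring
            have : x j - x t = 0 := by
              have := hright j hji; linarith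
            rw [this]
            exact le_trans (min_le_left _ _) hC0
          · have hthree := three_lb c1 c2 (x t) (x j) (x pb) hji (by linarith [hpb'])
            have hsum := sum3 (fun i => cost2 (c1, c2) (x i)) (fun i => cost2_nonneg _ _)
              (Ne.symm hj) htb' hjb'
            calc min (x j - x t) (x t + dB x t - x j)
                = min (x j - x t) (x pb - x j) := by rw [hpb']; ring_nf
              _ ≤ _ := hthree
              _ ≤ C := hsum
  -- assemble
  have htcost : cost2 (x t, x t + max (2 * dA x t) (dB x t)) (x t) = 0 := by
    unfold cost2
    simp only [sub_self, abs_zero]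
    exact min_eq_left (abs_nonneg _)
  have hcard : (Finset.univ.erase t).card = n - 1 := by
    rw [Finset.card_erase_of_mem (Finset.mem_univ t), Finset.card_univ, Fintype.card_fin]
  calc SC (x t, x t + max (2 * dA x t) (dB x t)) x
      = cost2 (x t, x t + max (2 * dA x t) (dB x t)) (x t)
        + ∑ j ∈ Finset.univ.erase t, cost2 (x t, x t + max (2 * dA x t) (dB x t)) (x j) :=
        (Finset.add_sum_erase _ _ (Finset.mem_univ t)).symm
    _ ≤ 0 + (Finset.univ.erase t).card • C := by
        gcongr
        · rw [htcost]
        · exact Finset.sum_le_card_nsmul _ _ _ (fun j hj => hagent j (Finset.ne_of_mem_erase hj))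
    _ = ((n : ℝ) - 1) * C := by
        rw [zero_add, hcard, nsmul_eq_mul]
        congr 1
        rw [Nat.cast_sub (by omega : 1 ≤ n), Nat.cast_one]

lemma dA_neg {n : ℕ} (x : Fin n → ℝ) (t : Fin n) : dA (fun i => -x i) t = dB x t := by
  unfold dA dB
  apply le_antisymm
  · apply Finset.sup'_le
    intro j hj
    have hj' : x t ≤ x j := by simpa using (Finset.mem_filter.mp hj).2
    have hmem : j ∈ Finset.univ.filter (fun j => x t ≤ x j) :=
      Finset.mem_filter.mpr ⟨Finset.mem_univ j, hj'⟩
    have h3 := Finset.le_sup' (fun j => x j - x t) hmem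
    show -x t - -x j ≤ _
    linarith
  · apply Finset.sup'_le
    intro j hj
    have hj' : x t ≤ x j := (Finset.mem_filter.mp hj).2
    have hmem : j ∈ Finset.univ.filter (fun j => (fun i => -x i) j ≤ (fun i => -x i) t) :=
      Finset.mem_filter.mpr ⟨Finset.mem_univ j, by simpa using hj'⟩
    simpa using Finset.le_sup' (fun j => (fun i => -x i) t - (fun i => -x i) j) hmem

lemma dB_neg {n : ℕ} (x : Fin n → ℝ) (t : Fin n) : dB (fun i => -x i) t = dA x t := by
  unfold dA dB
  apply le_antisymm
  · apply Finset.sup'_le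
    intro j hj
    have hj' : x j ≤ x t := by simpa using (Finset.mem_filter.mp hj).2
    have hmem : j ∈ Finset.univ.filter (fun j => x j ≤ x t) :=
      Finset.mem_filter.mpr ⟨Finset.mem_univ j, hj'⟩
    have h3 := Finset.le_sup' (fun j => x t - x j) hmem
    show -x j - -x t ≤ _
    linarith
  · apply Finset.sup'_le
    intro j hj
    have hj' : x j ≤ x t := (Finset.mem_filter.mp hj).2
    have hmem : j ∈ Finset.univ.filter (fun j => (fun i => -x i) t ≤ (fun i => -x i) j) :=
      Finset.mem_filter.mpr ⟨Finset.mem_univ j, by simpa using hj'⟩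
    have h3 := Finset.le_sup' (fun j => (fun i => -x i) j - (fun i => -x i) t) hmem
    have h4 : -x j - -x t ≤ _ := h3
    linarith

lemma SC_neg {n : ℕ} (x : Fin n → ℝ) (p1 p2 : ℝ) :
    SC (-p1, -p2) (fun i => -x i) = SC (p1, p2) x := by
  unfold SC cost2
  apply Finset.sum_congr rfl
  intro i _
  have e1 : |(-p1, -p2).1 - (fun i => -x i) i| = |p1 - x i| := by
    simp only; rw [show -p1 - -x i = -(p1 - x i) by ring, abs_neg]
  have e2 : |(-p1, -p2).2 - (fun i => -x i) i| = |p2 - x i| := by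
    simp only; rw [show -p2 - -x i = -(p2 - x i) by ring, abs_neg]
  rw [e1, e2]

lemma pointwise {n : ℕ} (hn : 2 ≤ n) (x : Fin n → ℝ) (t : Fin n) (l1 l2 : ℝ) :
    SC (mech1 x t) x ≤ ((n : ℝ) - 1) * SC (l1, l2) x := by
  by_cases h : dA x t ≤ dB x t
  · rw [mech1, if_pos h]
    exact key hn x t h l1 l2
  · rw [mech1, if_neg h]
    have h' : dA (fun i => -x i) t ≤ dB (fun i => -x i) t := by
      rw [dA_neg, dB_neg]; exact le_of_not_ge h
    have hk := key hn (fun i => -x i) t h' (-l1) (-l2)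
    rw [SC_neg x l1 l2] at hk
    have epair : ((fun i => -x i) t, (fun i => -x i) t
        + max (2 * dA (fun i => -x i) t) (dB (fun i => -x i) t))
        = (-(x t), -(x t - max (dA x t) (2 * dB x t))) := by
      rw [dA_neg, dB_neg]
      simp only [Prod.mk.injEq]
      refine ⟨trivial, ?_⟩
      rw [max_comm]; ring
    rw [epair, SC_neg x (x t) (x t - max (dA x t) (2 * dB x t))] at hk
    exact hk

/-- The social cost of Mechanism 1 is at most `(n - 1)·OPT(x)`. -/
theorem stmt5 {n : ℕ} (hn : 2 ≤ n) (x : Fin n → ℝ) (t : Fin n) :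
    SC (mech1 x t) x ≤ ((n : ℝ) - 1) * OPT x := by
  have hn1 : (0 : ℝ) < (n : ℝ) - 1 := by
    have : (2 : ℝ) ≤ (n : ℝ) := by exact_mod_cast hn
    linarith
  have hne : {c | ∃ l1 l2 : ℝ, c = SC (l1, l2) x}.Nonempty := ⟨SC (0, 0) x, 0, 0, rfl⟩
  have hlb : SC (mech1 x t) x / ((n : ℝ) - 1) ≤ OPT x := by
    apply le_csInf hne
    rintro c ⟨l1, l2, rfl⟩
    rw [div_le_iff₀ hn1]
    calc SC (mech1 x t) x ≤ ((n : ℝ) - 1) * SC (l1, l2) x := pointwise hn x t l1 l2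
      _ = SC (l1, l2) x * ((n : ℝ) - 1) := mul_comm _ _
  calc SC (mech1 x t) x
      = ((n : ℝ) - 1) * (SC (mech1 x t) x / ((n : ℝ) - 1)) := by field_simp
    _ ≤ ((n : ℝ) - 1) * OPT x := mul_le_mul_of_nonneg_left hlb (le_of_lt hn1)
end

section
/- Mechanism 2 with parameters k ≥ 2 and a ∈ (0,1) has social-cost approximation ratio at most max((1−a)k/(2a), a·k/(2(1−a)))·(n − 1): for every profile x ∈ ℝ^n, SC(f, x) ≤ max((1−a)k/(2a), a·k/(2(1−a)))·(n−1)·OPT(x). -/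
/-- Mechanism 2 with parameters `k`, `a` and dictator `t`, extended to general
profiles by translation and scaling.  With `x_l` the leftmost location, `x_r` the
rightmost and `L = x_r - x_l`: if `x_t` lies in the first `a`-fraction of the range,
`l2 = x_t + max((1-a)k/a·(x_t - x_l), x_r - x_t)`; otherwise
`l2 = x_t - max(x_t - x_l, ak/(1-a)·(x_r - x_t))`. -/
noncomputable def mech2 {n : ℕ} (k a : ℝ) (t : Fin n) (x : Fin n → ℝ) : ℝ × ℝ :=
  let xl := Finset.univ.inf' ⟨t, Finset.mem_univ t⟩ x
  let xr := Finset.univ.sup' ⟨t, Finset.mem_univ t⟩ x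
  let L := xr - xl
  (x t,
    if x t < xl + a * L then x t + max ((1 - a) * k / a * (x t - xl)) (xr - x t)
    else x t - max (x t - xl) (a * k / (1 - a) * (xr - x t)))

lemma three_pt (l1 l2 y1 y2 y3 : ℝ) (h12 : y1 ≤ y2) (h23 : y2 ≤ y3) :
    min (y2 - y1) (y3 - y2) ≤ cost2 (l1, l2) y1 + cost2 (l1, l2) y2 + cost2 (l1, l2) y3 := by
  have key : ∀ u v f : ℝ, v - u ≤ |f - u| + |f - v| := by
    intro u v f
    have h := abs_sub_le u f v
    have h2 : v - u ≤ |u - v| := by rw [abs_sub_comm]; exact le_abs_self _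
    rw [abs_sub_comm u f] at h
    linarith
  unfold cost2
  simp only [min_def]
  split_ifs <;>
    linarith [key y1 y2 l1, key y1 y2 l2, key y2 y3 l1, key y2 y3 l2, key y1 y3 l1, key y1 y3 l2,
      abs_nonneg (l1 - y1), abs_nonneg (l2 - y1), abs_nonneg (l1 - y2), abs_nonneg (l2 - y2),
      abs_nonneg (l1 - y3), abs_nonneg (l2 - y3)]

set_option maxHeartbeats 2000000 in
/-- Mechanism 2 has approximation ratio at most
`max((1-a)k/(2a), ak/(2(1-a)))·(n - 1)`. -/
theorem stmt9 {n : ℕ} (k a : ℝ) (hk : 2 ≤ k) (ha0 : 0 < a) (ha1 : a < 1)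
    (t : Fin n) (x : Fin n → ℝ) :
    SC (mech2 k a t x) x ≤
      max ((1 - a) * k / (2 * a)) (a * k / (2 * (1 - a))) * ((n : ℝ) - 1) * OPT x := by
  have ha1' : 0 < 1 - a := by linarith
  set C := max ((1 - a) * k / (2 * a)) (a * k / (2 * (1 - a))) with hCdef
  have hu : (1 - a) * k / (2 * a) ≤ C := le_max_left _ _
  have hv : a * k / (2 * (1 - a)) ≤ C := le_max_right _ _
  have hu' : (1 - a) * k ≤ 2 * a * C := by
    rw [div_le_iff₀ (by positivity)] at hu; linarith
  have hv' : a * k ≤ 2 * (1 - a) * C := by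
    rw [div_le_iff₀ (by positivity)] at hv; linarith
  have hCa : a ≤ (1 - a) * C := by
    nlinarith [mul_nonneg ha0.le (by linarith : (0:ℝ) ≤ k - 2)]
  have hCb : (1 - a) ≤ a * C := by
    nlinarith [mul_nonneg ha1'.le (by linarith : (0:ℝ) ≤ k - 2)]
  have hCk : k ≤ 2 * C := by
    rcases le_total a (1/2) with h | h
    · nlinarith [mul_le_mul_of_nonneg_left (by linarith : a ≤ 1 - a) (by linarith : (0:ℝ) ≤ k)]
    · nlinarith [mul_le_mul_of_nonneg_left (by linarith : 1 - a ≤ a) (by linarith : (0:ℝ) ≤ k)]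
  have hC1 : 1 ≤ C := by linarith
  have hC0 : 0 ≤ C := by linarith
  have hK1 : (1 - a) * k / a ≤ 2 * C := by rw [div_le_iff₀ ha0]; linarith
  have hK2 : a * k / (1 - a) ≤ 2 * C := by rw [div_le_iff₀ ha1']; linarith
  have hSCnn : ∀ p : ℝ × ℝ, 0 ≤ SC p x :=
    fun p => Finset.sum_nonneg fun i _ => cost2_nonneg _ _
  have hset : {c : ℝ | ∃ l1 l2 : ℝ, c = SC (l1, l2) x}.Nonempty := ⟨SC (0, 0) x, 0, 0, rfl⟩
  have hn : 0 < n := t.pos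
  obtain ⟨il, -, hil⟩ := Finset.exists_mem_eq_inf'
    (⟨t, Finset.mem_univ t⟩ : (Finset.univ : Finset (Fin n)).Nonempty) x
  obtain ⟨ir, -, hir⟩ := Finset.exists_mem_eq_sup'
    (⟨t, Finset.mem_univ t⟩ : (Finset.univ : Finset (Fin n)).Nonempty) x
  have hxl : ∀ i, x il ≤ x i := fun i => hil ▸ Finset.inf'_le x (Finset.mem_univ i)
  have hxr : ∀ i, x i ≤ x ir := fun i => hir ▸ Finset.le_sup' x (Finset.mem_univ i)
  have hmech : mech2 k a t x =
      (x t, if x t < x il + a * (x ir - x il)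
            then x t + max ((1 - a) * k / a * (x t - x il)) (x ir - x t)
            else x t - max (x t - x il) (a * k / (1 - a) * (x ir - x t))) := by
    simp only [mech2]
    rw [hil, hir]
  have hct : cost2 (mech2 k a t x) (x t) = 0 := by
    refine le_antisymm ?_ (cost2_nonneg _ _)
    rw [hmech]
    unfold cost2
    simp
  -- key per-pair bound
  have key : ∀ l1 l2 : ℝ, SC (mech2 k a t x) x ≤ C * ((n : ℝ) - 1) * SC (l1, l2) x := by
    intro l1 l2
    set S := SC (l1, l2) x with hS
    have hSnn : 0 ≤ S := hSCnn _
    have triple : ∀ p q r : Fin n, p ≠ q → q ≠ r → p ≠ r → x p ≤ x q → x q ≤ x r →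
        min (x q - x p) (x r - x q) ≤ S := by
      intro p q r hpq hqr hpr h1 h2
      have h3 := three_pt l1 l2 (x p) (x q) (x r) h1 h2
      have h4 : cost2 (l1, l2) (x p) + cost2 (l1, l2) (x q) + cost2 (l1, l2) (x r)
          = ∑ j ∈ ({p, q, r} : Finset (Fin n)), cost2 (l1, l2) (x j) := by
        rw [Finset.sum_insert (by simp [hpq, hpr]), Finset.sum_insert (by simp [hqr]),
          Finset.sum_singleton]
        ring
      have h5 : ∑ j ∈ ({p, q, r} : Finset (Fin n)), cost2 (l1, l2) (x j) ≤ S :=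
        Finset.sum_le_sum_of_subset_of_nonneg (Finset.subset_univ _)
          (fun j _ _ => cost2_nonneg _ _)
      linarith
    have agent : ∀ i, cost2 (mech2 k a t x) (x i) ≤ C * S := by
      intro i
      have hyl := hxl i
      have hyr := hxr i
      have hml := hxl t
      have hmr := hxr t
      have hCS : 0 ≤ C * S := mul_nonneg hC0 hSnn
      have hSCS : S ≤ C * S := by nlinarith
      rw [hmech]
      unfold cost2
      dsimp only
      split_ifs with hcase
      · -- Case A : x t in the left a-fraction
        have hA : (1 - a) * (x t - x il) ≤ a * (x ir - x t) := by nlinarith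
        have hdr0 : 0 < x ir - x t := by nlinarith
        have htir : t ≠ ir := by intro h; rw [h] at hdr0; linarith
        rcases le_total (x i) (x t) with hy | hy
        · -- A1 : agent left of x t
          have h1 : |x t - x i| = x t - x i := abs_of_nonneg (by linarith)
          refine le_trans (min_le_left _ _) ?_
          rw [h1]
          by_cases htl : t = il
          · have : x i = x t := le_antisymm hy (by rw [htl]; exact hyl)
            rw [this]; simpa using hCS
          · have hlr : il ≠ ir := by
              intro h; rw [h] at hyl hml; linarith
            have h2 := triple il t ir (fun h => htl h.symm) htir hlr hml hmr
            rcases le_total (x t - x il) (x ir - x t) with hmm | hmm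
            · rw [min_eq_left hmm] at h2
              linarith
            · rw [min_eq_right hmm] at h2
              have e1 : a * (x ir - x t) ≤ a * S := mul_le_mul_of_nonneg_left h2 ha0.le
              have e2 : a * S ≤ (1 - a) * C * S := mul_le_mul_of_nonneg_right hCa hSnn
              have e3 : (1 - a) * (x t - x il) ≤ (1 - a) * (C * S) := by linarith
              have := le_of_mul_le_mul_left e3 ha1'
              linarith
        · -- A2 : agent right of x t
          set M := max ((1 - a) * k / a * (x t - x il)) (x ir - x t) with hMdef
          have hMdr : x ir - x t ≤ M := le_max_right _ _
          have habs1 : |x t - x i| = x i - x t := by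
            rw [abs_sub_comm]; exact abs_of_nonneg (by linarith)
          have habs2 : |x t + M - x i| = x t + M - x i := abs_of_nonneg (by linarith)
          rw [habs1, habs2]
          rcases le_total ((1 - a) * k / a * (x t - x il)) (x ir - x t) with hmx | hmx
          · -- A2a : second facility at x ir
            have hMeq : M = x ir - x t := max_eq_right hmx
            rw [hMeq]
            by_cases hiir : i = ir
            · refine le_trans (min_le_right _ _) ?_
              rw [hiir]; linarith
            · by_cases heq : x i = x t
              · refine le_trans (min_le_left _ _) ?_
                rw [heq]; linarith
              · have hti : t ≠ i := fun h => heq (by rw [h])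
                have h2 := triple t i ir hti hiir htir hy (hxr i)
                have : min (x i - x t) (x t + (x ir - x t) - x i)
                    = min (x i - x t) (x ir - x i) := by ring_nf
                rw [this]
                linarith
          · -- A2b : second facility beyond x ir
            have hMeq : M = (1 - a) * k / a * (x t - x il) := max_eq_left hmx
            have havg : min (x i - x t) (x t + M - x i) ≤ M / 2 := by
              rcases le_total (x i - x t) (x t + M - x i) with h | h
              · rw [min_eq_left h]; linarith
              · rw [min_eq_right h]; linarith
            refine le_trans havg ?_
            by_cases htl : t = il
            · have hz : x t - x il = 0 := by rw [htl]; ring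
              rw [hMeq, hz, mul_zero]; linarith
            · have hlr : il ≠ ir := by
                intro h; rw [h] at hyl hml; linarith
              have h2 := triple il t ir (fun h => htl h.symm) htir hlr hml hmr
              rcases le_total (x t - x il) (x ir - x t) with hmm | hmm
              · rw [min_eq_left hmm] at h2
                have e1 : (1 - a) * k / a * (x t - x il) ≤ 2 * C * (x t - x il) :=
                  mul_le_mul_of_nonneg_right hK1 (by linarith)
                have e2 : 2 * C * (x t - x il) ≤ 2 * C * S :=
                  mul_le_mul_of_nonneg_left h2 (by linarith)
                rw [hMeq]; linarith
              · rw [min_eq_right hmm] at h2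
                have e0 : a * ((1 - a) * k / a * (x t - x il)) = (1 - a) * k * (x t - x il) := by
                  field_simp
                have e1 : k * ((1 - a) * (x t - x il)) ≤ k * (a * (x ir - x t)) :=
                  mul_le_mul_of_nonneg_left hA (by linarith)
                have e2 : k * (a * (x ir - x t)) ≤ 2 * C * (a * (x ir - x t)) :=
                  mul_le_mul_of_nonneg_right hCk (by nlinarith)
                have e3 : a * (x ir - x t) ≤ a * S := mul_le_mul_of_nonneg_left h2 ha0.le
                have e4 : 2 * C * (a * (x ir - x t)) ≤ 2 * C * (a * S) :=
                  mul_le_mul_of_nonneg_left e3 (by linarith)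
                have e5 : a * M ≤ a * (2 * (C * S)) := by rw [hMeq]; nlinarith
                have := le_of_mul_le_mul_left e5 ha0
                linarith
      · -- Case B : x t in the right (1-a)-fraction
        have hB : a * (x ir - x t) ≤ (1 - a) * (x t - x il) := by
          push_neg at hcase; nlinarith
        by_cases hall : x ir ≤ x il
        · have : x i = x t := le_antisymm (le_trans hyr (le_trans hall hml))
            (le_trans hmr (le_trans hall hyl))
          refine le_trans (min_le_left _ _) ?_
          rw [this]; simpa using hCS
        · push_neg at hall
          have hdl0 : 0 < x t - x il := by
            nlinarith [mul_pos ha0 (by linarith : (0:ℝ) < x ir - x il)]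
          have htl : t ≠ il := by intro h; rw [h] at hdl0; linarith
          set M := max (x t - x il) (a * k / (1 - a) * (x ir - x t)) with hMdef
          have hMdl : x t - x il ≤ M := le_max_left _ _
          rcases le_total (x t) (x i) with hy | hy
          · -- B1 : agent right of x t
            have h1 : |x t - x i| = x i - x t := by
              rw [abs_sub_comm]; exact abs_of_nonneg (by linarith)
            refine le_trans (min_le_left _ _) ?_
            rw [h1]
            by_cases htr : t = ir
            · have : x i = x t := le_antisymm (by rw [htr]; exact hyr) hy
              rw [this]; linarith
            · have hlr : il ≠ ir := by
                intro h; rw [h] at hdl0; linarith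
              have h2 := triple il t ir (fun h => htl h.symm) htr hlr hml hmr
              rcases le_total (x t - x il) (x ir - x t) with hmm | hmm
              · rw [min_eq_left hmm] at h2
                have e1 : (1 - a) * (x t - x il) ≤ a * C * (x t - x il) :=
                  mul_le_mul_of_nonneg_right hCb (by linarith)
                have e2 : a * C * (x t - x il) ≤ a * C * S :=
                  mul_le_mul_of_nonneg_left h2 (by positivity)
                have e3 : a * (x ir - x t) ≤ a * (C * S) := by linarith
                have := le_of_mul_le_mul_left e3 ha0
                linarith
              · rw [min_eq_right hmm] at h2
                linarith
          · -- B2 : agent left of x t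
            have habs1 : |x t - x i| = x t - x i := abs_of_nonneg (by linarith)
            have habs2 : |x t - M - x i| = -(x t - M - x i) :=
              abs_of_nonpos (by linarith)
            rw [habs1, habs2]
            rcases le_total (a * k / (1 - a) * (x ir - x t)) (x t - x il) with hmx | hmx
            · -- B2a : second facility at x il
              have hMeq : M = x t - x il := max_eq_left hmx
              rw [hMeq]
              by_cases hveq : x i = x il
              · refine le_trans (min_le_right _ _) ?_
                rw [hveq]; linarith
              · by_cases heq : x i = x t
                · refine le_trans (min_le_left _ _) ?_
                  rw [heq]; linarith
                · have hii : il ≠ i := fun h => hveq (by rw [h])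
                  have hit : i ≠ t := heq ∘ congrArg x ∘ id
                  have h2 := triple il i t hii hit htl.symm hyl hy
                  have : min (x t - x i) (-(x t - (x t - x il) - x i))
                      = min (x t - x i) (x i - x il) := by ring_nf
                  rw [this]
                  rw [min_comm]
                  linarith
            · -- B2b : second facility beyond x il
              have hMeq : M = a * k / (1 - a) * (x ir - x t) := max_eq_right hmx
              have havg : min (x t - x i) (-(x t - M - x i)) ≤ M / 2 := by
                rcases le_total (x t - x i) (-(x t - M - x i)) with h | h
                · rw [min_eq_left h]; linarith
                · rw [min_eq_right h]; linarith
              refine le_trans havg ?_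
              have hdr0 : 0 < x ir - x t := by
                by_contra h
                push_neg at h
                have : a * k / (1 - a) * (x ir - x t) ≤ 0 :=
                  mul_nonpos_of_nonneg_of_nonpos (by positivity) (by linarith)
                linarith
              have htr : t ≠ ir := by intro h; rw [h] at hdr0; linarith
              have hlr : il ≠ ir := by
                intro h; rw [h] at hdl0; linarith
              have h2 := triple il t ir (fun h => htl h.symm) htr hlr hml hmr
              rcases le_total (x t - x il) (x ir - x t) with hmm | hmm
              · rw [min_eq_left hmm] at h2
                have e0 : (1 - a) * (a * k / (1 - a) * (x ir - x t))
                    = a * k * (x ir - x t) := by field_simp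
                have e1 : k * (a * (x ir - x t)) ≤ k * ((1 - a) * (x t - x il)) :=
                  mul_le_mul_of_nonneg_left hB (by linarith)
                have e2 : k * ((1 - a) * (x t - x il)) ≤ 2 * C * ((1 - a) * (x t - x il)) :=
                  mul_le_mul_of_nonneg_right hCk (by nlinarith)
                have e3 : (1 - a) * (x t - x il) ≤ (1 - a) * S :=
                  mul_le_mul_of_nonneg_left h2 ha1'.le
                have e4 : 2 * C * ((1 - a) * (x t - x il)) ≤ 2 * C * ((1 - a) * S) :=
                  mul_le_mul_of_nonneg_left e3 (by linarith)
                have e5 : (1 - a) * M ≤ (1 - a) * (2 * (C * S)) := by rw [hMeq]; nlinarith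
                have := le_of_mul_le_mul_left e5 ha1'
                linarith
              · rw [min_eq_right hmm] at h2
                have e1 : a * k / (1 - a) * (x ir - x t) ≤ 2 * C * (x ir - x t) :=
                  mul_le_mul_of_nonneg_right hK2 (by linarith)
                have e2 : 2 * C * (x ir - x t) ≤ 2 * C * S :=
                  mul_le_mul_of_nonneg_left h2 (by linarith)
                rw [hMeq]; linarith
    -- sum the per-agent bounds
    have hsum : SC (mech2 k a t x) x
        = ∑ i ∈ Finset.univ.erase t, cost2 (mech2 k a t x) (x i) := by
      rw [SC, ← Finset.add_sum_erase _ _ (Finset.mem_univ t), hct, zero_add]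
    rw [hsum]
    have hbound : ∑ i ∈ Finset.univ.erase t, cost2 (mech2 k a t x) (x i)
        ≤ (Finset.univ.erase t).card • (C * S) :=
      Finset.sum_le_card_nsmul _ _ _ (fun i _ => agent i)
    have hcard : (Finset.univ.erase t).card = n - 1 := by
      rw [Finset.card_erase_of_mem (Finset.mem_univ t), Finset.card_univ, Fintype.card_fin]
    rw [hcard, nsmul_eq_mul] at hbound
    have hcast : ((n - 1 : ℕ) : ℝ) = (n : ℝ) - 1 := by
      rw [Nat.cast_sub hn]; simp
    rw [hcast] at hbound
    nlinarith [hbound]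
  -- conclude via the infimum
  rcases Nat.lt_or_ge n 2 with h2 | h2
  · -- n = 1
    have hn1 : n = 1 := by omega
    subst hn1
    have h0 : SC (mech2 k a t x) x = 0 := by
      rw [SC, Finset.univ_unique, Finset.sum_singleton, Subsingleton.elim (default : Fin 1) t, hct]
    rw [h0]
    have hOPT0 : 0 ≤ OPT x :=
      le_csInf hset (by rintro c ⟨l1, l2, rfl⟩; exact hSCnn _)
    have : ((1 : ℕ) : ℝ) - 1 = 0 := by norm_num
    rw [this, mul_zero, zero_mul]
  · have hn2 : (2 : ℝ) ≤ (n : ℝ) := by exact_mod_cast h2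
    have hD : 0 < C * ((n : ℝ) - 1) := by nlinarith
    have hle : SC (mech2 k a t x) x / (C * ((n : ℝ) - 1)) ≤ OPT x := by
      refine le_csInf hset ?_
      rintro c ⟨l1, l2, rfl⟩
      rw [div_le_iff₀ hD]
      nlinarith [key l1 l2]
    rw [div_le_iff₀ hD] at hle
    nlinarith [hle]
end

section
/- Mechanism 2 (with parameters k ≥ 2, a ∈ (0,1), dictator t, extended to general profiles by scale-freeness) is strategy-proof: no agent can strictly decrease her cost by misreporting her location. -/
/-- Mechanism 2 (with `k ≥ 2`, `a ∈ (0,1)`, dictator `t`) is strategy-proof: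
no agent can strictly decrease her cost by misreporting her location. -/
theorem stmt10 {n : ℕ} (k a : ℝ) (hk : 2 ≤ k) (ha0 : 0 < a) (ha1 : a < 1)
    (t : Fin n) :
    ∀ (i : Fin n) (x : Fin n → ℝ) (x' : ℝ),
      cost2 (mech2 k a t x) (x i) ≤ cost2 (mech2 k a t (Function.update x i x')) (x i) := by
  intro i x x'
  by_cases hit : i = t
  · -- the dictator: truthful cost is 0
    subst hit
    have h0 : cost2 (mech2 k a i x) (x i) ≤ 0 := by
      have h : cost2 (mech2 k a i x) (x i) ≤ |(mech2 k a i x).1 - x i| := min_le_left _ _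
      have h2 : (mech2 k a i x).1 = x i := rfl
      rw [h2] at h
      simpa using h
    exact h0.trans (le_min (abs_nonneg _) (abs_nonneg _))
  · have ha' : (0:ℝ) < 1 - a := by linarith
    have hk0 : (0:ℝ) ≤ k := by linarith
    have hc1nn : (0:ℝ) ≤ (1 - a) * k / a := by positivity
    have hc2nn : (0:ℝ) ≤ a * k / (1 - a) := by positivity
    have hti : t ≠ i := fun h => hit h.symm
    set y := Function.update x i x' with hy
    have hyj : ∀ j, j ≠ i → y j = x j := fun j hj => Function.update_of_ne hj x' x
    have hyt : y t = x t := hyj t hti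
    have hne : (Finset.univ : Finset (Fin n)).Nonempty := ⟨t, Finset.mem_univ t⟩
    set p := x t with hp
    set z := x i with hz
    set xl := Finset.univ.inf' hne x with hxl
    set xr := Finset.univ.sup' hne x with hxr
    set xl2 := Finset.univ.inf' hne y with hxl2
    set xr2 := Finset.univ.sup' hne y with hxr2
    have hmech1 : mech2 k a t x =
        (p, if p < xl + a * (xr - xl) then
              p + max ((1 - a) * k / a * (p - xl)) (xr - p)
            else p - max (p - xl) (a * k / (1 - a) * (xr - p))) := rfl
    have hmech2 : mech2 k a t y =
        (y t, if y t < xl2 + a * (xr2 - xl2) then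
              y t + max ((1 - a) * k / a * (y t - xl2)) (xr2 - y t)
            else y t - max (y t - xl2) (a * k / (1 - a) * (xr2 - y t))) := rfl
    rw [hyt] at hmech2
    -- basic bounds
    have hxl_t : xl ≤ p := Finset.inf'_le x (Finset.mem_univ t)
    have hxl_i : xl ≤ z := Finset.inf'_le x (Finset.mem_univ i)
    have hxr_t : p ≤ xr := Finset.le_sup' x (Finset.mem_univ t)
    have hxr_i : z ≤ xr := Finset.le_sup' x (Finset.mem_univ i)
    have hxl2t : xl2 ≤ p := by
      have := Finset.inf'_le y (Finset.mem_univ t); rwa [hyt] at this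
    have hxr2t : p ≤ xr2 := by
      have := Finset.le_sup' y (Finset.mem_univ t); rwa [hyt] at this
    have L1 : p ≤ z → xl2 ≤ xl := by
      intro h
      obtain ⟨j0, -, hj0⟩ := Finset.exists_mem_eq_inf' hne x
      rw [← hxl] at hj0
      by_cases hji : j0 = i
      · subst hji; rw [← hz] at hj0; linarith
      · have h2 : xl2 ≤ y j0 := Finset.inf'_le y (Finset.mem_univ j0)
        rw [hyj j0 hji] at h2; linarith [hj0, h2]
    have L2 : z ≤ p → xr ≤ xr2 := by
      intro h
      obtain ⟨j0, -, hj0⟩ := Finset.exists_mem_eq_sup' hne x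
      rw [← hxr] at hj0
      by_cases hji : j0 = i
      · subst hji; rw [← hz] at hj0; linarith
      · have h2 : y j0 ≤ xr2 := Finset.le_sup' y (Finset.mem_univ j0)
        rw [hyj j0 hji] at h2; linarith [hj0, h2]
    rw [hmech1, hmech2]
    simp only [cost2]
    split_ifs with h1 h2 h2
    all_goals rcases le_total z p with hzp | hpz
    -- Case (T,T), z ≤ p : report in case 1, l2' ≥ p ≥ z
    · refine le_min (min_le_left _ _) ?_
      have hM : (0:ℝ) ≤ max ((1 - a) * k / a * (p - xl2)) (xr2 - p) :=
        le_trans (by linarith) (le_max_right _ _)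
      calc min |p - z| |p + max ((1 - a) * k / a * (p - xl)) (xr - p) - z|
          ≤ |p - z| := min_le_left _ _
        _ = p - z := abs_of_nonneg (by linarith)
        _ ≤ p + max ((1 - a) * k / a * (p - xl2)) (xr2 - p) - z := by linarith
        _ ≤ |p + max ((1 - a) * k / a * (p - xl2)) (xr2 - p) - z| := le_abs_self _
    -- Case (T,T), p ≤ z : both in case 1
    · refine le_min (min_le_left _ _) ?_
      have hxl2le : xl2 ≤ xl := L1 hpz
      by_cases hq : xr - p ≤ (1 - a) * k / a * (p - xl)
      · have h5 : (1 - a) * k / a * (p - xl) ≤ (1 - a) * k / a * (p - xl2) :=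
          mul_le_mul_of_nonneg_left (by linarith) hc1nn
        have hM : max ((1 - a) * k / a * (p - xl)) (xr - p)
            ≤ max ((1 - a) * k / a * (p - xl2)) (xr2 - p) :=
          max_le (le_trans h5 (le_max_left _ _)) (le_trans hq (le_trans h5 (le_max_left _ _)))
        have hl2z : z ≤ p + max ((1 - a) * k / a * (p - xl)) (xr - p) :=
          le_trans hxr_i (by linarith [le_max_right ((1 - a) * k / a * (p - xl)) (xr - p)])
        calc min |p - z| |p + max ((1 - a) * k / a * (p - xl)) (xr - p) - z|
            ≤ |p + max ((1 - a) * k / a * (p - xl)) (xr - p) - z| := min_le_right _ _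
          _ = p + max ((1 - a) * k / a * (p - xl)) (xr - p) - z := abs_of_nonneg (by linarith)
          _ ≤ p + max ((1 - a) * k / a * (p - xl2)) (xr2 - p) - z := by linarith
          _ ≤ |p + max ((1 - a) * k / a * (p - xl2)) (xr2 - p) - z| := le_abs_self _
      · have hMeq : max ((1 - a) * k / a * (p - xl)) (xr - p) = xr - p :=
          max_eq_right (le_of_lt (not_le.mp hq))
        obtain ⟨j0, -, hj0⟩ := Finset.exists_mem_eq_sup' hne x
        rw [← hxr] at hj0
        by_cases hji : j0 = i
        · subst hji; rw [← hz] at hj0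
          calc min |p - z| |p + max ((1 - a) * k / a * (p - xl)) (xr - p) - z|
              ≤ |p + max ((1 - a) * k / a * (p - xl)) (xr - p) - z| := min_le_right _ _
            _ = 0 := by rw [hMeq, hj0]; simp
            _ ≤ |p + max ((1 - a) * k / a * (p - xl2)) (xr2 - p) - z| := abs_nonneg _
        · have hxrle : xr ≤ xr2 := by
            have h2 : y j0 ≤ xr2 := Finset.le_sup' y (Finset.mem_univ j0)
            rw [hyj j0 hji] at h2; linarith [hj0, h2]
          have hM : max ((1 - a) * k / a * (p - xl)) (xr - p)
              ≤ max ((1 - a) * k / a * (p - xl2)) (xr2 - p) := by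
            rw [hMeq]; exact le_trans (by linarith) (le_max_right _ _)
          have hl2z : z ≤ p + max ((1 - a) * k / a * (p - xl)) (xr - p) := by
            rw [hMeq]; linarith
          calc min |p - z| |p + max ((1 - a) * k / a * (p - xl)) (xr - p) - z|
              ≤ |p + max ((1 - a) * k / a * (p - xl)) (xr - p) - z| := min_le_right _ _
            _ = p + max ((1 - a) * k / a * (p - xl)) (xr - p) - z := abs_of_nonneg (by linarith)
            _ ≤ p + max ((1 - a) * k / a * (p - xl2)) (xr2 - p) - z := by linarith
            _ ≤ |p + max ((1 - a) * k / a * (p - xl2)) (xr2 - p) - z| := le_abs_self _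
    -- Case (T,F), z ≤ p : truth case 1, report case 2, k-factor argument
    · refine le_min (min_le_left _ _) ?_
      have hxrle : xr ≤ xr2 := L2 hzp
      have hc : (1 - a) * (p - xl) ≤ a * (xr - p) := by linarith [h1]
      have t1 : (1 - a) * (p - z) ≤ (1 - a) * (p - xl) :=
        mul_le_mul_of_nonneg_left (by linarith) ha'.le
      have t2 : a * (xr - p) ≤ a * (xr2 - p) :=
        mul_le_mul_of_nonneg_left (by linarith) ha0.le
      have s3 : (1 - a) * (p - z) ≤ a * (xr2 - p) := by linarith
      have s4 : k * ((1 - a) * (p - z)) ≤ k * (a * (xr2 - p)) :=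
        mul_le_mul_of_nonneg_left s3 hk0
      have key : k * (p - z) ≤ a * k / (1 - a) * (xr2 - p) := by
        rw [div_mul_eq_mul_div, le_div_iff₀ ha']
        linarith [s4]
      have hM : k * (p - z) ≤ max (p - xl2) (a * k / (1 - a) * (xr2 - p)) :=
        le_trans key (le_max_right _ _)
      have h2k : 2 * (p - z) ≤ k * (p - z) := by
        linarith [mul_nonneg (sub_nonneg.mpr hk) (sub_nonneg.mpr hzp)]
      calc min |p - z| |p + max ((1 - a) * k / a * (p - xl)) (xr - p) - z|
          ≤ |p - z| := min_le_left _ _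
        _ = p - z := abs_of_nonneg (by linarith)
        _ ≤ -(p - max (p - xl2) (a * k / (1 - a) * (xr2 - p)) - z) := by linarith
        _ ≤ |p - max (p - xl2) (a * k / (1 - a) * (xr2 - p)) - z| := neg_le_abs _
    -- Case (T,F), p ≤ z : report case 2, l2' ≤ p ≤ z
    · refine le_min (min_le_left _ _) ?_
      have hM : (0:ℝ) ≤ max (p - xl2) (a * k / (1 - a) * (xr2 - p)) :=
        le_trans (by linarith) (le_max_left _ _)
      calc min |p - z| |p + max ((1 - a) * k / a * (p - xl)) (xr - p) - z|
          ≤ |p - z| := min_le_left _ _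
        _ = z - p := by rw [abs_of_nonpos (by linarith)]; ring
        _ ≤ -(p - max (p - xl2) (a * k / (1 - a) * (xr2 - p)) - z) := by linarith
        _ ≤ |p - max (p - xl2) (a * k / (1 - a) * (xr2 - p)) - z| := neg_le_abs _
    -- Case (F,T), z ≤ p : report case 1, l2' ≥ p ≥ z
    · refine le_min (min_le_left _ _) ?_
      have hM : (0:ℝ) ≤ max ((1 - a) * k / a * (p - xl2)) (xr2 - p) :=
        le_trans (by linarith) (le_max_right _ _)
      calc min |p - z| |p - max (p - xl) (a * k / (1 - a) * (xr - p)) - z|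
          ≤ |p - z| := min_le_left _ _
        _ = p - z := abs_of_nonneg (by linarith)
        _ ≤ p + max ((1 - a) * k / a * (p - xl2)) (xr2 - p) - z := by linarith
        _ ≤ |p + max ((1 - a) * k / a * (p - xl2)) (xr2 - p) - z| := le_abs_self _
    -- Case (F,T), p ≤ z : truth case 2, report case 1, k-factor argument
    · refine le_min (min_le_left _ _) ?_
      have hxl2le : xl2 ≤ xl := L1 hpz
      have hc : a * (xr - p) ≤ (1 - a) * (p - xl) := by linarith [not_lt.mp h1]
      have t1 : a * (z - p) ≤ a * (xr - p) :=
        mul_le_mul_of_nonneg_left (by linarith) ha0.le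
      have t2 : (1 - a) * (p - xl) ≤ (1 - a) * (p - xl2) :=
        mul_le_mul_of_nonneg_left (by linarith) ha'.le
      have s3 : a * (z - p) ≤ (1 - a) * (p - xl2) := by linarith
      have s4 : k * (a * (z - p)) ≤ k * ((1 - a) * (p - xl2)) :=
        mul_le_mul_of_nonneg_left s3 hk0
      have key : k * (z - p) ≤ (1 - a) * k / a * (p - xl2) := by
        rw [div_mul_eq_mul_div, le_div_iff₀ ha0]
        linarith [s4]
      have hM : k * (z - p) ≤ max ((1 - a) * k / a * (p - xl2)) (xr2 - p) :=
        le_trans key (le_max_left _ _)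
      have h2k : 2 * (z - p) ≤ k * (z - p) := by
        linarith [mul_nonneg (sub_nonneg.mpr hk) (sub_nonneg.mpr hpz)]
      calc min |p - z| |p - max (p - xl) (a * k / (1 - a) * (xr - p)) - z|
          ≤ |p - z| := min_le_left _ _
        _ = z - p := by rw [abs_of_nonpos (by linarith)]; ring
        _ ≤ p + max ((1 - a) * k / a * (p - xl2)) (xr2 - p) - z := by linarith
        _ ≤ |p + max ((1 - a) * k / a * (p - xl2)) (xr2 - p) - z| := le_abs_self _
    -- Case (F,F), z ≤ p : both in case 2
    · refine le_min (min_le_left _ _) ?_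
      have hxrle : xr ≤ xr2 := L2 hzp
      by_cases hq : p - xl ≤ a * k / (1 - a) * (xr - p)
      · have h5 : a * k / (1 - a) * (xr - p) ≤ a * k / (1 - a) * (xr2 - p) :=
          mul_le_mul_of_nonneg_left (by linarith) hc2nn
        have hM : max (p - xl) (a * k / (1 - a) * (xr - p))
            ≤ max (p - xl2) (a * k / (1 - a) * (xr2 - p)) :=
          max_le (le_trans hq (le_trans h5 (le_max_right _ _))) (le_trans h5 (le_max_right _ _))
        have hl2z : p - max (p - xl) (a * k / (1 - a) * (xr - p)) ≤ z := by
          have := le_max_left (p - xl) (a * k / (1 - a) * (xr - p)); linarith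
        calc min |p - z| |p - max (p - xl) (a * k / (1 - a) * (xr - p)) - z|
            ≤ |p - max (p - xl) (a * k / (1 - a) * (xr - p)) - z| := min_le_right _ _
          _ = -(p - max (p - xl) (a * k / (1 - a) * (xr - p)) - z) := by
              rw [abs_of_nonpos (by linarith)]
          _ ≤ -(p - max (p - xl2) (a * k / (1 - a) * (xr2 - p)) - z) := by linarith
          _ ≤ |p - max (p - xl2) (a * k / (1 - a) * (xr2 - p)) - z| := neg_le_abs _
      · have hMeq : max (p - xl) (a * k / (1 - a) * (xr - p)) = p - xl :=
          max_eq_left (le_of_lt (not_le.mp hq))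
        obtain ⟨j0, -, hj0⟩ := Finset.exists_mem_eq_inf' hne x
        rw [← hxl] at hj0
        by_cases hji : j0 = i
        · subst hji; rw [← hz] at hj0
          calc min |p - z| |p - max (p - xl) (a * k / (1 - a) * (xr - p)) - z|
              ≤ |p - max (p - xl) (a * k / (1 - a) * (xr - p)) - z| := min_le_right _ _
            _ = 0 := by rw [hMeq, hj0]; simp
            _ ≤ |p - max (p - xl2) (a * k / (1 - a) * (xr2 - p)) - z| := abs_nonneg _
        · have hxlle : xl2 ≤ xl := by
            have h2 : xl2 ≤ y j0 := Finset.inf'_le y (Finset.mem_univ j0)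
            rw [hyj j0 hji] at h2; linarith [hj0, h2]
          have hM : max (p - xl) (a * k / (1 - a) * (xr - p))
              ≤ max (p - xl2) (a * k / (1 - a) * (xr2 - p)) := by
            rw [hMeq]; exact le_trans (by linarith) (le_max_left _ _)
          have hl2z : p - max (p - xl) (a * k / (1 - a) * (xr - p)) ≤ z := by
            rw [hMeq]; linarith
          calc min |p - z| |p - max (p - xl) (a * k / (1 - a) * (xr - p)) - z|
              ≤ |p - max (p - xl) (a * k / (1 - a) * (xr - p)) - z| := min_le_right _ _
            _ = -(p - max (p - xl) (a * k / (1 - a) * (xr - p)) - z) := by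
                rw [abs_of_nonpos (by linarith)]
            _ ≤ -(p - max (p - xl2) (a * k / (1 - a) * (xr2 - p)) - z) := by linarith
            _ ≤ |p - max (p - xl2) (a * k / (1 - a) * (xr2 - p)) - z| := neg_le_abs _
    -- Case (F,F), p ≤ z : report case 2, l2' ≤ p ≤ z
    · refine le_min (min_le_left _ _) ?_
      have hM : (0:ℝ) ≤ max (p - xl2) (a * k / (1 - a) * (xr2 - p)) :=
        le_trans (by linarith) (le_max_left _ _)
      calc min |p - z| |p - max (p - xl) (a * k / (1 - a) * (xr - p)) - z|
          ≤ |p - z| := min_le_left _ _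
        _ = z - p := by rw [abs_of_nonpos (by linarith)]; ring
        _ ≤ -(p - max (p - xl2) (a * k / (1 - a) * (xr2 - p)) - z) := by linarith
        _ ≤ |p - max (p - xl2) (a * k / (1 - a) * (xr2 - p)) - z| := neg_le_abs _
end
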